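/- Let P be a shortest s-t path in G \ {e_i} and let (x, y) be the last crossing edge of C(e_i) on P (with x ∈ T_1(e_i), y ∈ T_2(e_i)). Then replacing the prefix of P from s to x by the tree path from s to x in T_1(e_i) yields an s-t path in G \ {e_i} of length at most that of P which uses exactly one crossing edge of C(e_i). -/

import Mathlib

open Classical SimpleGraph

noncomputable section

variable {V : Type*}

/-- Total weight of a walk, summing `w` over its darts. -/
def walkWeight (G : SimpleGraph V) (w : V → V → ℝ) {u v : V} (p : G.Walk u v) : ℝ :=
  (p.darts.map fun d => w d.fst d.snd).sum

/-- Weighted shortest-path distance: infimum of walk weights. -/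
def wdist (G : SimpleGraph V) (w : V → V → ℝ) (u v : V) : ℝ :=
  sInf {r | ∃ p : G.Walk u v, walkWeight G w p = r}

/-- The graph obtained by deleting a set of vertices (kept on the same vertex type). -/
def delVerts (G : SimpleGraph V) (S : Set V) : SimpleGraph V where
  Adj a b := G.Adj a b ∧ a ∉ S ∧ b ∉ S
  symm := ⟨fun a b h => ⟨h.1.symm, h.2.2, h.2.1⟩⟩
  loopless := ⟨fun a h => G.loopless.irrefl a h.1⟩

/-- `u` is in the subtree of `T` rooted at the `k`-th vertex of the path `vp`. -/
def inSub (T : SimpleGraph V) (vp : ℕ → V) (k : ℕ) (u : V) : Prop :=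
  k = 0 ∨ (T.deleteEdges {s(vp (k-1), vp k)}).Reachable (vp k) u

/-- The label of a vertex: the largest `k ≤ l` with `u` in the subtree rooted at `vp k`. -/
def label (T : SimpleGraph V) (vp : ℕ → V) (l : ℕ) (u : V) : ℕ :=
  sSup {k | k ≤ l ∧ inSub T vp k u}

lemma walkWeight_nonneg {G : SimpleGraph V} {w : V → V → ℝ}
    (hw : ∀ a b, G.Adj a b → 0 ≤ w a b) {u v : V} (p : G.Walk u v) :
    0 ≤ walkWeight G w p := by
  apply List.sum_nonneg
  intro r hr
  simp only [List.mem_map] at hr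
  obtain ⟨d, _, rfl⟩ := hr
  exact hw _ _ d.adj

lemma walkWeight_append {G : SimpleGraph V} (w : V → V → ℝ) {u v z : V}
    (p : G.Walk u v) (q : G.Walk v z) :
    walkWeight G w (p.append q) = walkWeight G w p + walkWeight G w q := by
  simp [walkWeight, Walk.darts_append]

lemma walkWeight_copy {G : SimpleGraph V} (w : V → V → ℝ) {u v u' v' : V}
    (p : G.Walk u v) (hu : u = u') (hv : v = v') :
    walkWeight G w (p.copy hu hv) = walkWeight G w p := by
  subst hu hv; rfl

lemma walkWeight_mapLe {G G' : SimpleGraph V} (h : G ≤ G') (w : V → V → ℝ)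
    {u v : V} (p : G.Walk u v) :
    walkWeight G' w (p.mapLe h) = walkWeight G w p := by
  simp only [walkWeight, Walk.mapLe, Walk.darts_map, List.map_map]
  rfl

lemma darts_dropUntil_sublist {G : SimpleGraph V} [DecidableEq V] {u v x : V}
    (p : G.Walk u v) (h : x ∈ p.support) :
    (p.dropUntil x h).darts.Sublist p.darts := by
  conv_rhs => rw [← p.take_spec h]
  rw [Walk.darts_append]
  exact List.sublist_append_right _ _

lemma darts_bypass_sublist {G : SimpleGraph V} [DecidableEq V] {u v : V}
    (p : G.Walk u v) : p.bypass.darts.Sublist p.darts := by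
  induction p with
  | nil => simp [Walk.bypass]
  | cons h q ih =>
    rw [Walk.bypass]
    split_ifs with hs
    · exact ((darts_dropUntil_sublist _ hs).trans ih).trans (List.sublist_cons_self _ _)
    · rw [Walk.darts_cons, Walk.darts_cons]
      exact ih.cons₂ _

lemma walkWeight_bypass_le {G : SimpleGraph V} [DecidableEq V] {w : V → V → ℝ}
    (hw : ∀ a b, G.Adj a b → 0 ≤ w a b) {u v : V} (p : G.Walk u v) :
    walkWeight G w p.bypass ≤ walkWeight G w p := by
  apply List.Sublist.sum_le_sum ((darts_bypass_sublist p).map _)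
  intro a ha
  simp only [List.mem_map] at ha
  obtain ⟨d, _, rfl⟩ := ha
  exact hw _ _ d.adj

lemma wdist_le {G : SimpleGraph V} {w : V → V → ℝ}
    (hw : ∀ a b, G.Adj a b → 0 ≤ w a b) {u v : V} (p : G.Walk u v) :
    wdist G w u v ≤ walkWeight G w p :=
  csInf_le ⟨0, fun r ⟨q, hq⟩ => hq ▸ walkWeight_nonneg hw q⟩ ⟨p, rfl⟩

lemma walkWeight_le_wdist_tree {T : SimpleGraph V} {w : V → V → ℝ}
    (hT : T.IsTree) (hw : ∀ a b, T.Adj a b → 0 ≤ w a b) {u v : V}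
    (R : T.Walk u v) (hR : R.IsPath) :
    walkWeight T w R ≤ wdist T w u v := by
  classical
  rw [wdist]
  have hne : {r | ∃ p : T.Walk u v, walkWeight T w p = r}.Nonempty := ⟨_, R, rfl⟩
  apply le_csInf hne
  rintro r ⟨q, rfl⟩
  have hq : q.bypass = R := by
    have h1 := hT.existsUnique_path u v
    exact h1.unique q.bypass_isPath hR
  calc walkWeight T w R = walkWeight T w q.bypass := by rw [hq]
    _ ≤ walkWeight T w q := walkWeight_bypass_le hw q

/-- take the first `n` darts of a walk -/
def wtake {G : SimpleGraph V} : {u v : V} → (p : G.Walk u v) → (n : ℕ) → G.Walk u (p.getVert n)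
  | _, _, .nil, _ => .nil
  | _, _, .cons _ _, 0 => .nil
  | _, _, .cons h q, (n+1) => Walk.cons h (wtake q n)

lemma darts_wtake {G : SimpleGraph V} : ∀ {u v : V} (p : G.Walk u v) (n : ℕ),
    (wtake p n).darts = p.darts.take n
  | _, _, .nil, n => by cases n <;> rfl
  | _, _, .cons _ _, 0 => rfl
  | _, _, .cons h q, (n+1) => by
    simp [wtake, Walk.darts_cons, darts_wtake q n]

lemma darts_drop {G : SimpleGraph V} {u v : V} (p : G.Walk u v) :
    ∀ n : ℕ, (p.drop n).darts = p.darts.drop n := by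
  induction p with
  | nil => intro n; cases n <;> rfl
  | cons h q ih =>
    intro n
    cases n with
    | zero => simp [Walk.drop]
    | succ n => simp [Walk.drop, ih n]

lemma darts_getElem_fst {G : SimpleGraph V} {u v : V} (p : G.Walk u v) :
    ∀ (m : ℕ) (hm : m < p.length),
      (p.darts[m]'(by rw [Walk.length_darts]; exact hm)).fst = p.getVert m := by
  induction p with
  | nil => intro m hm; simp at hm
  | cons h q ih =>
    intro m hm
    cases m with
    | zero => rfl
    | succ m =>
      simp only [Walk.darts_cons, List.getElem_cons_succ, Walk.getVert_cons_succ]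
      exact ih m (by simpa [Nat.succ_lt_succ_iff] using hm)

lemma darts_getElem_snd {G : SimpleGraph V} {u v : V} (p : G.Walk u v) :
    ∀ (m : ℕ) (hm : m < p.length),
      (p.darts[m]'(by rw [Walk.length_darts]; exact hm)).snd = p.getVert (m+1) := by
  induction p with
  | nil => intro m hm; simp at hm
  | cons h q ih =>
    intro m hm
    cases m with
    | zero =>
      simp only [Walk.darts_cons, List.getElem_cons_zero, Walk.getVert_cons_succ]
      exact (Walk.getVert_zero q).symm
    | succ m =>
      simp only [Walk.darts_cons, List.getElem_cons_succ, Walk.getVert_cons_succ]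
      exact ih m (by simpa [Nat.succ_lt_succ_iff] using hm)

lemma darts_getElem_edge {G : SimpleGraph V} {u v : V} (p : G.Walk u v)
    (m : ℕ) (hm : m < p.length) :
    (p.darts[m]'(by rw [Walk.length_darts]; exact hm)).edge
      = s(p.getVert m, p.getVert (m+1)) := by
  rw [← darts_getElem_fst p m hm, ← darts_getElem_snd p m hm]
  rfl

lemma edge_getVert_mem {G : SimpleGraph V} {u v : V} (p : G.Walk u v)
    (m : ℕ) (hm : m < p.length) :
    s(p.getVert m, p.getVert (m+1)) ∈ p.edges := by
  rw [← darts_getElem_edge p m hm]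
  exact List.mem_map_of_mem (List.getElem_mem _)

lemma path_getVert_inj {G : SimpleGraph V} {u v : V} {p : G.Walk u v} (hp : p.IsPath) :
    ∀ {m k : ℕ}, m ≤ p.length → k ≤ p.length → p.getVert m = p.getVert k → m = k := by
  induction p with
  | nil => intro m k hm hk _; simp at hm hk; omega
  | @cons u b c h q ih =>
    intro m k hm hk heq
    have hq := hp.of_cons
    have hu : u ∉ q.support := by
      have := hp.support_nodup
      simp only [Walk.support_cons, List.nodup_cons] at this
      exact this.1
    cases m with
    | zero =>
      cases k with
      | zero => rfl
      | succ k =>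
        exfalso
        apply hu
        rw [Walk.getVert_cons_succ] at heq
        rw [Walk.mem_support_iff_exists_getVert]
        exact ⟨k, heq.symm, by simpa [Nat.succ_le_succ_iff] using hk⟩
    | succ m =>
      cases k with
      | zero =>
        exfalso
        apply hu
        rw [Walk.getVert_cons_succ] at heq
        rw [Walk.mem_support_iff_exists_getVert]
        exact ⟨m, heq, by simpa [Nat.succ_le_succ_iff] using hm⟩
      | succ k =>
        rw [Walk.getVert_cons_succ, Walk.getVert_cons_succ] at heq
        have := ih hq (by simpa [Nat.succ_le_succ_iff] using hm)
          (by simpa [Nat.succ_le_succ_iff] using hk) heq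
        omega

lemma tree_deleteEdge_not_reachable {T : SimpleGraph V} (hT : T.IsTree) {a b : V}
    (hab : T.Adj a b) : ¬ (T.deleteEdges {s(a,b)}).Reachable a b := by
  have hb := (isAcyclic_iff_forall_adj_isBridge.mp hT.IsAcyclic) hab
  rw [isBridge_iff] at hb
  exact hb

theorem stmt19 {V : Type*}
    (G : SimpleGraph V) (hconn : G.Connected) (w : V → V → ℝ)
    (hw : ∀ a b, G.Adj a b → 0 < w a b) (hws : ∀ a b, w a b = w b a)
    (s t : V) (p : G.Walk s t) (hp : p.IsPath)
    (hps : walkWeight G w p = wdist G w s t)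
    (T : SimpleGraph V) (hTG : T ≤ G) (hT : T.IsTree)
    (hSPT : ∀ v, wdist T w s v = wdist G w s v)
    (hPT : ∀ e ∈ p.edges, e ∈ T.edgeSet)
    (i : ℕ) (hi1 : 1 ≤ i) (hil : i ≤ p.length)
    (P : (G.deleteEdges {s(p.getVert (i-1), p.getVert i)}).Walk s t) (hP : P.IsPath)
    (hPs : walkWeight (G.deleteEdges {s(p.getVert (i-1), p.getVert i)}) w P =
      wdist (G.deleteEdges {s(p.getVert (i-1), p.getVert i)}) w s t)
    (x y : V) (n : ℕ) (hn : n < P.length)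
    (hnx : P.getVert n = x) (hny : P.getVert (n + 1) = y)
    (hcx : (T.deleteEdges {s(p.getVert (i-1), p.getVert i)}).Reachable s x)
    (hcy : (T.deleteEdges {s(p.getVert (i-1), p.getVert i)}).Reachable (p.getVert i) y)
    (hlast : ∀ m, n < m → m < P.length →
      ¬ (((T.deleteEdges {s(p.getVert (i-1), p.getVert i)}).Reachable s (P.getVert m) ∧
          (T.deleteEdges {s(p.getVert (i-1), p.getVert i)}).Reachable (p.getVert i)
            (P.getVert (m+1))) ∨
         ((T.deleteEdges {s(p.getVert (i-1), p.getVert i)}).Reachable s (P.getVert (m+1)) ∧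
          (T.deleteEdges {s(p.getVert (i-1), p.getVert i)}).Reachable (p.getVert i)
            (P.getVert m)))) :
    ∃ Q : (G.deleteEdges {s(p.getVert (i-1), p.getVert i)}).Walk s t,
      walkWeight (G.deleteEdges {s(p.getVert (i-1), p.getVert i)}) w Q ≤
        walkWeight (G.deleteEdges {s(p.getVert (i-1), p.getVert i)}) w P ∧
      s(x, y) ∈ Q.edges ∧
      (∃! e, e ∈ Q.edges ∧ (fun e => e ∈ G.edgeSet ∧ e ≠ s(p.getVert (i-1), p.getVert i) ∧
      ∃ x y, e = s(x, y) ∧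
        (T.deleteEdges {s(p.getVert (i-1), p.getVert i)}).Reachable s x ∧
        (T.deleteEdges {s(p.getVert (i-1), p.getVert i)}).Reachable (p.getVert i) y) e) := by
  classical
  have hw0 : ∀ a b, G.Adj a b → 0 ≤ w a b := fun a b h => (hw a b h).le
  have hG'G : (G.deleteEdges {s(p.getVert (i-1), p.getVert i)}) ≤ G := deleteEdges_le _
  have hT'T : (T.deleteEdges {s(p.getVert (i-1), p.getVert i)}) ≤ T := deleteEdges_le _
  have hT'G' : (T.deleteEdges {s(p.getVert (i-1), p.getVert i)}) ≤ (G.deleteEdges {s(p.getVert (i-1), p.getVert i)}) := deleteEdges_mono hTG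
  have hw0T : ∀ a b, T.Adj a b → 0 ≤ w a b := fun a b h => hw0 a b (hTG h)
  have hi2 : i - 1 < p.length := by omega
  have hi' : i - 1 + 1 = i := by omega
  have hmemp : s(p.getVert (i-1), p.getVert i) ∈ p.edges := by
    have h1 := edge_getVert_mem p (i-1) hi2
    rwa [hi'] at h1
  have hTadj : T.Adj (p.getVert (i-1)) (p.getVert i) := by
    have h1 : s(p.getVert (i-1), p.getVert i) ∈ T.edgeSet := hPT _ hmemp
    rwa [mem_edgeSet] at h1
  have hnotTe : ¬ (T.deleteEdges {s(p.getVert (i-1), p.getVert i)}).Reachable (p.getVert (i-1)) (p.getVert i) :=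
    tree_deleteEdge_not_reachable hT hTadj
  have hs1 : (T.deleteEdges {s(p.getVert (i-1), p.getVert i)}).Reachable s (p.getVert (i-1)) := by
    have hclaim : ∀ e' ∈ (wtake p (i-1)).edges, e' ∈ (T.deleteEdges {s(p.getVert (i-1), p.getVert i)}).edgeSet := by
      intro e' he'
      rw [Walk.edges, darts_wtake] at he'
      obtain ⟨d, hd, rfl⟩ := List.mem_map.mp he'
      obtain ⟨k, hk, rfl⟩ := List.mem_iff_getElem.mp hd
      have hk1 : k < i - 1 := by
        have h2 := hk; simp only [List.length_take, Walk.length_darts, lt_min_iff] at h2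
        exact h2.1
      have hk2 : k < p.length := by
        have h2 := hk; simp only [List.length_take, Walk.length_darts, lt_min_iff] at h2
        exact h2.2
      rw [List.getElem_take, darts_getElem_edge p k hk2]
      rw [edgeSet_deleteEdges]
      refine ⟨hPT _ (edge_getVert_mem p k hk2), ?_⟩
      simp only [Set.mem_singleton_iff]
      intro hcontra
      rw [Sym2.eq_iff] at hcontra
      rcases hcontra with ⟨h1, _⟩ | ⟨h1, _⟩
      · have := path_getVert_inj hp (le_of_lt hk2) (le_of_lt hi2) h1; omega
      · have := path_getVert_inj hp (le_of_lt hk2) hil h1; omega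
    exact ⟨(wtake p (i-1)).transfer (T.deleteEdges {s(p.getVert (i-1), p.getVert i)}) hclaim⟩
  have hnsr : ¬ (T.deleteEdges {s(p.getVert (i-1), p.getVert i)}).Reachable s (p.getVert i) := fun h => hnotTe (hs1.symm.trans h)
  obtain ⟨R0⟩ := id hcx
  set R := R0.bypass with hRdef
  have hR : R.IsPath := R0.bypass_isPath
  have hwR : walkWeight (T.deleteEdges {s(p.getVert (i-1), p.getVert i)}) w R ≤ wdist G w s x := by
    rw [← hSPT x]
    have hRT : walkWeight T w (R.mapLe hT'T) = walkWeight (T.deleteEdges {s(p.getVert (i-1), p.getVert i)}) w R := walkWeight_mapLe _ _ _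
    rw [← hRT]
    exact walkWeight_le_wdist_tree hT hw0T _ (hR.mapLe _)
  have hpre : wdist G w s x ≤ ((P.darts.take n).map fun d => w d.fst d.snd).sum := by
    have h1 := wdist_le hw0 (((wtake P n).copy rfl hnx).mapLe hG'G)
    rwa [walkWeight_mapLe, walkWeight_copy, walkWeight, darts_wtake] at h1
  have hsplit : walkWeight (G.deleteEdges {s(p.getVert (i-1), p.getVert i)}) w P
      = ((P.darts.take n).map fun d => w d.fst d.snd).sum
        + ((P.darts.drop n).map fun d => w d.fst d.snd).sum := by
    rw [walkWeight, ← List.sum_append, ← List.map_append, List.take_append_drop]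
  set Q : (G.deleteEdges {s(p.getVert (i-1), p.getVert i)}).Walk s t := (R.mapLe hT'G').append ((P.drop n).copy hnx rfl) with hQdef
  have hnlen : n < P.darts.length := by rw [Walk.length_darts]; exact hn
  have hdn : P.darts[n].edge = s(x, y) := by
    rw [darts_getElem_edge P n hn, hnx, hny]
  have hxyQ : s(x, y) ∈ Q.edges := by
    rw [hQdef, Walk.edges_append]
    apply List.mem_append_right
    rw [Walk.edges_copy, Walk.edges, darts_drop]
    have hlen : 0 < (P.darts.drop n).length := by
      simp only [List.length_drop, Walk.length_darts]; omega
    refine List.mem_map.mpr ⟨(P.darts.drop n)[0]'hlen, List.getElem_mem _, ?_⟩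
    rw [List.getElem_drop]
    simpa using hdn
  have hwQ : walkWeight (G.deleteEdges {s(p.getVert (i-1), p.getVert i)}) w Q ≤ walkWeight (G.deleteEdges {s(p.getVert (i-1), p.getVert i)}) w P := by
    rw [hQdef, walkWeight_append, walkWeight_mapLe, walkWeight_copy, hsplit]
    have hdw : walkWeight (G.deleteEdges {s(p.getVert (i-1), p.getVert i)}) w (P.drop n)
        = ((P.darts.drop n).map fun d => w d.fst d.snd).sum := by
      rw [walkWeight, darts_drop]
    rw [hdw]
    have h2 := hwR.trans hpre
    linarith
  have hG'adjxy : (G.deleteEdges {s(p.getVert (i-1), p.getVert i)}).Adj x y := by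
    have h1 := P.adj_getVert_succ hn
    rwa [hnx, hny] at h1
  have hcrossxy : s(x, y) ∈ G.edgeSet ∧ s(x, y) ≠ s(p.getVert (i-1), p.getVert i) ∧
      ∃ a b, s(x, y) = s(a, b) ∧ (T.deleteEdges {s(p.getVert (i-1), p.getVert i)}).Reachable s a ∧ (T.deleteEdges {s(p.getVert (i-1), p.getVert i)}).Reachable (p.getVert i) b := by
    rw [deleteEdges_adj] at hG'adjxy
    refine ⟨(mem_edgeSet _).mpr hG'adjxy.1, ?_, x, y, rfl, hcx, hcy⟩
    simpa using hG'adjxy.2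
  refine ⟨Q, hwQ, hxyQ, s(x, y), ⟨hxyQ, hcrossxy⟩, ?_⟩
  rintro e' ⟨he'Q, _, _, a, b, rfl, hra, hrb⟩
  rw [hQdef, Walk.edges_append, List.mem_append] at he'Q
  rcases he'Q with hL | hRt
  · exfalso
    simp only [Walk.mapLe, Walk.edges_map, List.mem_map, Hom.coe_ofLE,
      Sym2.map_id, Sym2.map_id', id_eq, id] at hL
    obtain ⟨e'', he'', heq⟩ := hL
    have hT'e : s(a, b) ∈ (T.deleteEdges {s(p.getVert (i-1), p.getVert i)}).edgeSet := heq ▸ R.edges_subset_edgeSet he''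
    have hadj : (T.deleteEdges {s(p.getVert (i-1), p.getVert i)}).Adj a b := (mem_edgeSet _).mp hT'e
    exact hnsr ((hra.trans hadj.reachable).trans hrb.symm)
  · rw [Walk.edges_copy, Walk.edges, darts_drop] at hRt
    obtain ⟨d, hd, hde⟩ := List.mem_map.mp hRt
    obtain ⟨k, hk, rfl⟩ := List.mem_iff_getElem.mp hd
    have hk2 : n + k < P.length := by
      have h3 := hk; simp only [List.length_drop, Walk.length_darts] at h3; omega
    rw [List.getElem_drop, darts_getElem_edge P (n+k) hk2] at hde
    cases k with
    | zero =>
      rw [← hde]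
      simp only [Nat.add_zero]
      rw [hnx, hny]
    | succ k' =>
      exfalso
      apply hlast (n + (k'+1)) (by omega) hk2
      rw [Sym2.eq_iff] at hde
      rcases hde with ⟨h1, h2⟩ | ⟨h1, h2⟩
      · exact Or.inl ⟨h1 ▸ hra, h2 ▸ hrb⟩
      · exact Or.inr ⟨h2 ▸ hra, h1 ▸ hrb⟩
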